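/- arXiv:2409.07797 — 2 statements merged into one kernel-verified Lean document; each statement's English description precedes it below -/
import Mathlib

section
/- Convergence of the QNMF ADMM iteration for robust PCA (Theorem 3.4): let Y be an m×n quaternion matrix, ρ > 0, λ > 0, α > 0, β⁰ > 0, μ > 1, and set β^{(k)} = μ^k·β⁰. Suppose (X^{(k)}), (Z^{(k)}), (η^{(k)}) are sequences of m×n quaternion matrices such that for every k: (i) Z^{(k+1)} is the entrywise quaternion soft-threshold with threshold ρ/β^{(k)} of W^{(k)} = Y − X^{(k)} + η^{(k)}/β^{(k)}, i.e. Z^{(k+1)}_{ij} = (W^{(k)}_{ij}/|W^{(k)}_{ij}|)·max(|W^{(k)}_{ij}| − ρ/β^{(k)}, 0) when W^{(k)}_{ij} ≠ 0 and Z^{(k+1)}_{ij} = 0 otherwise; (ii) there exist unitary quaternion matrices U^{(k)}, V^{(k)} and σ^{(k)} ∈ ℝ^M (M = min(m,n)) with σ^{(k)}₁ ≥ … ≥ σ^{(k)}_M ≥ 0 such that Y − Z^{(k+1)} + η^{(k)}/β^{(k)} = U^{(k)} * D(σ^{(k)}) * (V^{(k)})ᴴ and X^{(k+1)} = U^{(k)}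 * D(S_{λ/β^{(k)},α}(σ^{(k)})) * (V^{(k)})ᴴ; (iii) η^{(k+1)} = η^{(k)} + β^{(k)}·(Y − X^{(k+1)} − Z^{(k+1)}). Then ‖X^{(k+1)} − X^{(k)}‖_F → 0, ‖Z^{(k+1)} − Z^{(k)}‖_F → 0, and ‖Y − X^{(k+1)} − Z^{(k+1)}‖_F → 0 as k → ∞. -/
open Matrix BigOperators Filter

noncomputable section

abbrev Quat := Quaternion ℝ

def IsQUnitary {k : ℕ} (U : Matrix (Fin k) (Fin k) Quat) : Prop :=
  Uᴴ * U = 1 ∧ U * Uᴴ = 1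

def Dmat {m n : ℕ} (s : Fin (min m n) → ℝ) : Matrix (Fin m) (Fin n) Quat :=
  fun i j =>
    if h : (i : ℕ) = (j : ℕ) then
      ((s ⟨(i : ℕ), by have h1 := i.isLt; have h2 := j.isLt; omega⟩ : ℝ) : Quat)
    else 0

def frob {m n : ℕ} (A : Matrix (Fin m) (Fin n) Quat) : ℝ :=
  Real.sqrt (∑ i, ∑ j, ‖A i j‖ ^ 2)

def Sshrink {M : ℕ} (lam alph : ℝ) (σ : Fin M → ℝ) : Fin M → ℝ :=
  let z : Fin M → ℝ := fun i => if lam < σ i then σ i - lam / 2 else 0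
  let nz : ℝ := Real.sqrt (∑ i, z i ^ 2)
  if nz = 0 then fun _ => 0
  else
    let K : ℝ := 1 + alph * lam / (2 * nz)
    fun i =>
      if K * lam / (2 * (K - 1)) < σ i then σ i
      else if lam < σ i then K * (σ i - lam / 2)
      else 0

open Classical in
def softQ (t : ℝ) (q : Quat) : Quat :=
  if q = 0 then 0 else (max (‖q‖ - t) 0 / ‖q‖) • q

def qinner {m n : ℕ} (P Q : Matrix (Fin m) (Fin n) Quat) : ℝ :=
  ∑ i, ∑ j, (star (P i j) * Q i j).re

/-! ### Auxiliary lemmas -/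

lemma softQ_close {t : ℝ} (ht : 0 ≤ t) (q : Quat) : ‖q - softQ t q‖ ≤ t := by
  unfold softQ
  split_ifs with h
  · simpa [h] using ht
  · have hq : 0 < ‖q‖ := norm_pos_iff.mpr h
    have hrw : q - (max (‖q‖ - t) 0 / ‖q‖) • q = (1 - max (‖q‖ - t) 0 / ‖q‖) • q := by
      rw [sub_smul, one_smul]
    rw [hrw, norm_smul, Real.norm_eq_abs]
    rcases le_total (‖q‖ - t) 0 with hle | hle
    · rw [max_eq_right hle]
      simp only [zero_div, sub_zero, abs_one, one_mul]
      linarith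
    · rw [max_eq_left hle]
      have h1 : 1 - (‖q‖ - t) / ‖q‖ = t / ‖q‖ := by field_simp; ring
      rw [h1, abs_of_nonneg (by positivity), div_mul_cancel₀ _ hq.ne']

lemma shrink_close {M : ℕ} {lam alph : ℝ} (hlam : 0 < lam) (halph : 0 < alph)
    {σ : Fin M → ℝ} (hσ : ∀ i, 0 ≤ σ i) (i : Fin M) :
    |Sshrink lam alph σ i - σ i| ≤ lam := by
  have hσi := hσ i
  simp only [Sshrink, ite_apply]
  set E : ℝ := Real.sqrt (∑ j, (if lam < σ j then σ j - lam / 2 else 0) ^ 2) with hE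
  set K : ℝ := 1 + alph * lam / (2 * E) with hK
  split_ifs with h0 h1 h2
  · -- E = 0 : then σ i ≤ lam
    have hσle : σ i ≤ lam := by
      by_contra hgt
      push_neg at hgt
      have hzi : 0 < (if lam < σ i then σ i - lam / 2 else 0) ^ 2 := by
        rw [if_pos hgt]
        have : 0 < σ i - lam / 2 := by linarith
        positivity
      have hsum : 0 < ∑ j, (if lam < σ j then σ j - lam / 2 else 0) ^ 2 :=
        lt_of_lt_of_le hzi (Finset.single_le_sum
          (f := fun j => (if lam < σ j then σ j - lam / 2 else 0) ^ 2)
          (fun j _ => sq_nonneg _) (Finset.mem_univ i))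
      have : 0 < E := hE ▸ Real.sqrt_pos.mpr hsum
      exact this.ne' h0
    rw [zero_sub, abs_neg, abs_of_nonneg hσi]
    exact hσle
  · simpa using hlam.le
  · -- middle regime
    have hEnn : 0 ≤ E := hE ▸ Real.sqrt_nonneg _
    have hEpos : 0 < E := lt_of_le_of_ne hEnn (Ne.symm h0)
    have hK1 : 0 < K - 1 := by
      rw [hK]; have : 0 < alph * lam / (2 * E) := by positivity
      linarith
    have hK0 : 0 < K := by linarith
    clear_value E K
    push_neg at h1
    have h1' : σ i * (2 * (K - 1)) ≤ K * lam := by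
      rw [← le_div_iff₀ (by positivity)]
      exact h1
    have hprod : 0 ≤ (K - 1) * (σ i - lam) := mul_nonneg hK1.le (by linarith)
    rw [abs_le]
    have hKlam : 0 ≤ K * lam := mul_nonneg hK0.le hlam.le
    constructor
    · nlinarith [hprod, hKlam]
    · nlinarith [h1', hlam]
  · -- σ i ≤ lam
    push_neg at h2
    rw [zero_sub, abs_neg, abs_of_nonneg hσi]
    exact h2

lemma frob_nonneg {m n : ℕ} (A : Matrix (Fin m) (Fin n) Quat) : 0 ≤ frob A :=
  Real.sqrt_nonneg _

lemma frob_le_bound {m n : ℕ} {A : Matrix (Fin m) (Fin n) Quat} {c : ℝ}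
    (hc : 0 ≤ c) (h : ∀ i j, ‖A i j‖ ≤ c) : frob A ≤ Real.sqrt ((m : ℝ) * n) * c := by
  unfold frob
  have h1 : ∑ i, ∑ j, ‖A i j‖ ^ 2 ≤ (m : ℝ) * n * c ^ 2 := by
    calc ∑ i, ∑ j, ‖A i j‖ ^ 2 ≤ ∑ _i : Fin m, ∑ _j : Fin n, c ^ 2 :=
          Finset.sum_le_sum fun i _ => Finset.sum_le_sum fun j _ =>
            pow_le_pow_left₀ (norm_nonneg _) (h i j) 2
      _ = (m : ℝ) * n * c ^ 2 := by
          simp [Finset.sum_const, Finset.card_univ, nsmul_eq_mul]; ring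
  calc Real.sqrt (∑ i, ∑ j, ‖A i j‖ ^ 2) ≤ Real.sqrt ((m : ℝ) * n * c ^ 2) :=
        Real.sqrt_le_sqrt h1
    _ = Real.sqrt ((m : ℝ) * n) * c := by
        rw [Real.sqrt_mul (by positivity), Real.sqrt_sq hc]

lemma unitary_entry_norm_le {k : ℕ} {U : Matrix (Fin k) (Fin k) Quat}
    (hU : IsQUnitary U) (i j : Fin k) : ‖U i j‖ ≤ 1 := by
  have hre : ∀ (f : Fin k → Quat), (∑ a, f a).re = ∑ a, (f a).re := fun f =>
    map_sum (⟨⟨QuaternionAlgebra.re, rfl⟩, fun _ _ => rfl⟩ : Quat →+ ℝ) f Finset.univ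
  have h1 : (Uᴴ * U) j j = 1 := by rw [hU.1]; simp [Matrix.one_apply]
  have h2 : ∑ a, ‖U a j‖ * ‖U a j‖ = 1 := by
    have h3 := congrArg QuaternionAlgebra.re h1
    rw [Matrix.mul_apply] at h3
    simp only [Matrix.conjTranspose_apply, Quaternion.star_mul_self] at h3
    rw [hre] at h3
    simpa [Quaternion.normSq_eq_norm_mul_self, Quaternion.re_one] using h3
  have h3 : ‖U i j‖ * ‖U i j‖ ≤ 1 := by
    rw [← h2]
    exact Finset.single_le_sum (f := fun a => ‖U a j‖ * ‖U a j‖)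
      (fun a _ => mul_self_nonneg _) (Finset.mem_univ i)
  nlinarith [norm_nonneg (U i j)]

lemma Dmat_sub {m n : ℕ} (s t : Fin (min m n) → ℝ) :
    Dmat (m := m) (n := n) (fun i => s i - t i) = Dmat s - Dmat t := by
  apply Matrix.ext
  intro a b
  simp only [Dmat, Matrix.sub_apply]
  split_ifs with h
  · push_cast; ring
  · simp

lemma UDV_entry_bound {m n : ℕ} {U : Matrix (Fin m) (Fin m) Quat}
    {V : Matrix (Fin n) (Fin n) Quat} (hU : IsQUnitary U) (hV : IsQUnitary V)
    {s : Fin (min m n) → ℝ} {c : ℝ} (hc : 0 ≤ c) (hs : ∀ i, |s i| ≤ c)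
    (i : Fin m) (j : Fin n) : ‖(U * Dmat s * Vᴴ) i j‖ ≤ (m : ℝ) * n * c := by
  have hD : ∀ a b, ‖Dmat (m := m) (n := n) s a b‖ ≤ c := by
    intro a b
    by_cases h : (a : ℕ) = (b : ℕ)
    · simp only [Dmat, dif_pos h, Quaternion.norm_coe, Real.norm_eq_abs]
      exact hs _
    · simp only [Dmat, dif_neg h, norm_zero]; exact hc
  have hUe := fun a => unitary_entry_norm_le hU i a
  have hVe := fun b => unitary_entry_norm_le hV j b
  calc ‖(U * Dmat s * Vᴴ) i j‖ = ‖∑ b, (U * Dmat s) i b * star (V j b)‖ := by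
        simp [Matrix.mul_apply, Matrix.conjTranspose_apply]
    _ ≤ ∑ b, ‖(U * Dmat s) i b * star (V j b)‖ := norm_sum_le _ _
    _ ≤ ∑ _b : Fin n, (m : ℝ) * c := by
        refine Finset.sum_le_sum fun b _ => ?_
        rw [norm_mul, norm_star]
        have h1 : ‖(U * Dmat s) i b‖ ≤ (m : ℝ) * c := by
          calc ‖(U * Dmat s) i b‖ = ‖∑ a, U i a * Dmat s a b‖ := by
                rw [Matrix.mul_apply]
            _ ≤ ∑ a, ‖U i a * Dmat s a b‖ := norm_sum_le _ _
            _ ≤ ∑ _a : Fin m, c := by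
                refine Finset.sum_le_sum fun a _ => ?_
                rw [norm_mul]
                calc ‖U i a‖ * ‖Dmat s a b‖ ≤ 1 * c :=
                      mul_le_mul (hUe a) (hD a b) (norm_nonneg _) zero_le_one
                  _ = c := one_mul c
            _ = (m : ℝ) * c := by
                simp [Finset.sum_const, Finset.card_univ, nsmul_eq_mul]
        calc ‖(U * Dmat s) i b‖ * ‖V j b‖ ≤ ((m : ℝ) * c) * 1 :=
              mul_le_mul h1 (hVe b) (norm_nonneg _) (by positivity)
          _ = (m : ℝ) * c := mul_one _
    _ = (n : ℝ) * ((m : ℝ) * c) := by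
        simp [Finset.sum_const, Finset.card_univ, nsmul_eq_mul]
    _ = (m : ℝ) * n * c := by ring

theorem qnmf_admm_rpca_convergence (m n : ℕ)
    (Y : Matrix (Fin m) (Fin n) Quat)
    (rho lam alph bet0 mu : ℝ)
    (hrho : 0 < rho) (hlam : 0 < lam) (halph : 0 < alph)
    (hbet0 : 0 < bet0) (hmu : 1 < mu)
    (bet : ℕ → ℝ) (hbet : ∀ k, bet k = mu ^ k * bet0)
    (X Z η : ℕ → Matrix (Fin m) (Fin n) Quat)
    (hZ : ∀ k, ∀ i j,
        Z (k + 1) i j = softQ (rho / bet k) ((Y - X k + (bet k)⁻¹ • η k) i j))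
    (hX : ∀ k, ∃ (U : Matrix (Fin m) (Fin m) Quat) (V : Matrix (Fin n) (Fin n) Quat)
        (σ : Fin (min m n) → ℝ),
        IsQUnitary U ∧ IsQUnitary V ∧ Antitone σ ∧ (∀ i, 0 ≤ σ i) ∧
        Y - Z (k + 1) + (bet k)⁻¹ • η k = U * Dmat σ * Vᴴ ∧
        X (k + 1) = U * Dmat (Sshrink (lam / bet k) alph σ) * Vᴴ)
    (hη : ∀ k, η (k + 1) = η k + bet k • (Y - X (k + 1) - Z (k + 1))) :
    Tendsto (fun k => frob (X (k + 1) - X k)) atTop (nhds 0) ∧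
    Tendsto (fun k => frob (Z (k + 1) - Z k)) atTop (nhds 0) ∧
    Tendsto (fun k => frob (Y - X (k + 1) - Z (k + 1))) atTop (nhds 0) := by
  have hbpos : ∀ k, 0 < bet k := fun k => by rw [hbet]; positivity
  have hbne : ∀ k, bet k ≠ 0 := fun k => (hbpos k).ne'
  have hbsucc : ∀ k, bet (k + 1) = mu * bet k := fun k => by
    rw [hbet, hbet, pow_succ]; ring
  have hbtop : Tendsto bet atTop atTop := by
    have h1 : Tendsto (fun k : ℕ => mu ^ k * bet0) atTop atTop :=
      Tendsto.atTop_mul_const hbet0 (tendsto_pow_atTop_atTop_of_one_lt hmu)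
    exact h1.congr fun k => (hbet k).symm
  -- master squeeze lemma
  have key : ∀ (A : ℕ → Matrix (Fin m) (Fin n) Quat) (C : ℝ), 0 ≤ C →
      (∀ᶠ k in atTop, ∀ i j, ‖A k i j‖ ≤ C / bet k) →
      Tendsto (fun k => frob (A k)) atTop (nhds 0) := by
    intro A C hC hA
    have hg : Tendsto (fun k => Real.sqrt ((m : ℝ) * n) * C / bet k) atTop (nhds 0) :=
      Tendsto.div_atTop tendsto_const_nhds hbtop
    refine squeeze_zero' (Eventually.of_forall fun k => frob_nonneg _) ?_ hg
    filter_upwards [hA] with k hk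
    calc frob (A k) ≤ Real.sqrt ((m : ℝ) * n) * (C / bet k) :=
          frob_le_bound (div_nonneg hC (hbpos k).le) hk
      _ = Real.sqrt ((m : ℝ) * n) * C / bet k := by ring
  -- entrywise bound from the Z update (soft threshold)
  have hB2 : ∀ k (i : Fin m) (j : Fin n),
      ‖((Y - X k + (bet k)⁻¹ • η k) - Z (k + 1)) i j‖ ≤ rho / bet k := by
    intro k i j
    rw [Matrix.sub_apply, hZ k i j]
    exact softQ_close (div_nonneg hrho.le (hbpos k).le) _
  -- entrywise bound from the X update (shrinkage)
  have hB1 : ∀ k (i : Fin m) (j : Fin n),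
      ‖(X (k + 1) - (Y - Z (k + 1) + (bet k)⁻¹ • η k)) i j‖
        ≤ (m : ℝ) * n * (lam / bet k) := by
    intro k i j
    obtain ⟨U, V, σ, hU, hV, -, hσ0, hA, hXk⟩ := hX k
    have hdiff : X (k + 1) - (Y - Z (k + 1) + (bet k)⁻¹ • η k)
        = U * Dmat (fun i => Sshrink (lam / bet k) alph σ i - σ i) * Vᴴ := by
      rw [hXk, hA, Dmat_sub, Matrix.mul_sub, Matrix.sub_mul]
    rw [hdiff]
    exact UDV_entry_bound hU hV (div_nonneg hlam.le (hbpos k).le)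
      (fun a => shrink_close (div_pos hlam (hbpos k)) halph hσ0 a) i j
  -- boundedness of the multipliers
  have hB3 : ∀ k (i : Fin m) (j : Fin n), ‖η (k + 1) i j‖ ≤ (m : ℝ) * n * lam := by
    intro k i j
    have hrew : η (k + 1) = bet k • ((Y - Z (k + 1) + (bet k)⁻¹ • η k) - X (k + 1)) := by
      rw [hη k]
      simp only [smul_sub, smul_add, smul_inv_smul₀ (hbne k)]
      abel
    rw [hrew, Matrix.smul_apply, norm_smul, Real.norm_eq_abs, abs_of_pos (hbpos k)]
    have h1 : ‖((Y - Z (k + 1) + (bet k)⁻¹ • η k) - X (k + 1)) i j‖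
        ≤ (m : ℝ) * n * (lam / bet k) := by
      rw [Matrix.sub_apply, norm_sub_rev, ← Matrix.sub_apply]
      exact hB1 k i j
    calc bet k * ‖((Y - Z (k + 1) + (bet k)⁻¹ • η k) - X (k + 1)) i j‖
        ≤ bet k * ((m : ℝ) * n * (lam / bet k)) :=
          mul_le_mul_of_nonneg_left h1 (hbpos k).le
      _ = (m : ℝ) * n * lam := by
          field_simp
          rw [mul_assoc, mul_comm (bet k) _, mul_div_cancel_right₀ _ (hbne k)]
  -- the residual identity
  have hres : ∀ k, Y - X (k + 1) - Z (k + 1) = (bet k)⁻¹ • (η (k + 1) - η k) := by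
    intro k
    rw [hη k, add_sub_cancel_left, inv_smul_smul₀ (hbne k)]
  -- entrywise bound for successive X differences
  have hXd : ∀ k (i : Fin m) (j : Fin n),
      ‖(X (k + 1) - X k) i j‖ ≤ ((m : ℝ) * n * lam + rho) / bet k := by
    intro k i j
    have hmat : X (k + 1) - X k
        = (X (k + 1) - (Y - Z (k + 1) + (bet k)⁻¹ • η k))
          + ((Y - X k + (bet k)⁻¹ • η k) - Z (k + 1)) := by abel
    rw [hmat, Matrix.add_apply]
    refine (norm_add_le _ _).trans ?_
    refine (add_le_add (hB1 k i j) (hB2 k i j)).trans (le_of_eq ?_)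
    rw [← mul_div_assoc, ← add_div]
  have hmn0 : (0 : ℝ) ≤ (m : ℝ) * n := by positivity
  have hA0 : (0 : ℝ) ≤ (m : ℝ) * n * lam := mul_nonneg hmn0 hlam.le
  refine ⟨?_, ?_, ?_⟩
  · -- X differences
    exact key (fun k => X (k + 1) - X k) ((m : ℝ) * n * lam + rho)
      (by linarith) (Eventually.of_forall fun k => hXd k)
  · -- Z differences
    refine key (fun k => Z (k + 1) - Z k) (mu * (3 * ((m : ℝ) * n * lam) + 3 * rho))
      (by nlinarith) ?_
    filter_upwards [eventually_ge_atTop 2] with k hk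
    obtain ⟨l, rfl⟩ : ∃ l, k = l + 2 := ⟨k - 2, by omega⟩
    intro i j
    show ‖(Z (l + 3) - Z (l + 2)) i j‖
        ≤ mu * (3 * ((m : ℝ) * n * lam) + 3 * rho) / bet (l + 2)
    have hentry : (Z (l + 3) - Z (l + 2)) i j
        = -(((Y - X (l + 2) + (bet (l + 2))⁻¹ • η (l + 2)) - Z (l + 3)) i j)
          + ((X (l + 1) - X (l + 2)) i j)
          + ((((bet (l + 2))⁻¹ • η (l + 2)) i j) - (((bet (l + 1))⁻¹ • η (l + 1)) i j))
          + (((Y - X (l + 1) + (bet (l + 1))⁻¹ • η (l + 1)) - Z (l + 2)) i j) := by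
      simp only [Matrix.add_apply, Matrix.sub_apply, Matrix.smul_apply]
      abel
    rw [hentry]
    have e1 : ‖((Y - X (l + 2) + (bet (l + 2))⁻¹ • η (l + 2)) - Z (l + 3)) i j‖
        ≤ rho / bet (l + 2) := hB2 (l + 2) i j
    have e2 : ‖(X (l + 1) - X (l + 2)) i j‖
        ≤ ((m : ℝ) * n * lam + rho) / bet (l + 1) := by
      rw [Matrix.sub_apply, norm_sub_rev, ← Matrix.sub_apply]
      exact hXd (l + 1) i j
    have e3 : ‖((bet (l + 2))⁻¹ • η (l + 2)) i j‖
        ≤ ((m : ℝ) * n * lam) / bet (l + 2) := by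
      rw [Matrix.smul_apply, norm_smul, Real.norm_eq_abs,
        abs_of_pos (inv_pos.mpr (hbpos _)), inv_mul_eq_div]
      exact (div_le_div_iff_of_pos_right (hbpos _)).mpr (hB3 (l + 1) i j)
    have e4 : ‖((bet (l + 1))⁻¹ • η (l + 1)) i j‖
        ≤ ((m : ℝ) * n * lam) / bet (l + 1) := by
      rw [Matrix.smul_apply, norm_smul, Real.norm_eq_abs,
        abs_of_pos (inv_pos.mpr (hbpos _)), inv_mul_eq_div]
      exact (div_le_div_iff_of_pos_right (hbpos _)).mpr (hB3 l i j)
    have e5 : ‖((Y - X (l + 1) + (bet (l + 1))⁻¹ • η (l + 1)) - Z (l + 2)) i j‖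
        ≤ rho / bet (l + 1) := hB2 (l + 1) i j
    have hsplit : ‖-(((Y - X (l + 2) + (bet (l + 2))⁻¹ • η (l + 2)) - Z (l + 3)) i j)
          + ((X (l + 1) - X (l + 2)) i j)
          + ((((bet (l + 2))⁻¹ • η (l + 2)) i j) - (((bet (l + 1))⁻¹ • η (l + 1)) i j))
          + (((Y - X (l + 1) + (bet (l + 1))⁻¹ • η (l + 1)) - Z (l + 2)) i j)‖
        ≤ rho / bet (l + 2) + ((m : ℝ) * n * lam + rho) / bet (l + 1)
          + (((m : ℝ) * n * lam) / bet (l + 2) + ((m : ℝ) * n * lam) / bet (l + 1))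
          + rho / bet (l + 1) := by
      refine (norm_add_le _ _).trans (add_le_add ?_ e5)
      refine (norm_add_le _ _).trans (add_le_add ?_ ((norm_sub_le _ _).trans (add_le_add e3 e4)))
      refine (norm_add_le _ _).trans (add_le_add ?_ e2)
      rw [norm_neg]; exact e1
    refine hsplit.trans ?_
    have hb2 : bet (l + 2) = mu * bet (l + 1) := hbsucc (l + 1)
    have hb1 : 0 < bet (l + 1) := hbpos _
    have hmu0 : (0 : ℝ) < mu := lt_trans zero_lt_one hmu
    rw [hb2, mul_div_mul_left _ _ hmu0.ne']
    have hv : (mu * bet (l + 1))⁻¹ ≤ (bet (l + 1))⁻¹ := by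
      apply inv_anti₀ hb1
      nlinarith
    have hprod : 0 ≤ ((m : ℝ) * n * lam + rho) * ((bet (l + 1))⁻¹ - (mu * bet (l + 1))⁻¹) :=
      mul_nonneg (by linarith) (by linarith)
    simp only [div_eq_mul_inv]
    nlinarith [hprod]
  · -- residuals
    refine key (fun k => Y - X (k + 1) - Z (k + 1)) (2 * ((m : ℝ) * n * lam))
      (by linarith) ?_
    filter_upwards [eventually_ge_atTop 1] with k hk
    obtain ⟨l, rfl⟩ : ∃ l, k = l + 1 := ⟨k - 1, by omega⟩
    intro i j
    rw [hres (l + 1), Matrix.smul_apply, Matrix.sub_apply, norm_smul, Real.norm_eq_abs,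
      abs_of_pos (inv_pos.mpr (hbpos (l + 1)))]
    have h1 : ‖η (l + 1 + 1) i j - η (l + 1) i j‖ ≤ 2 * ((m : ℝ) * n * lam) := by
      refine (norm_sub_le _ _).trans ?_
      have := add_le_add (hB3 (l + 1) i j) (hB3 l i j)
      linarith
    calc (bet (l + 1))⁻¹ * ‖η (l + 1 + 1) i j - η (l + 1) i j‖
        ≤ (bet (l + 1))⁻¹ * (2 * ((m : ℝ) * n * lam)) :=
          mul_le_mul_of_nonneg_left h1 (inv_nonneg.mpr (hbpos _).le)
      _ = 2 * ((m : ℝ) * n * lam) / bet (l + 1) := by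
          rw [inv_mul_eq_div]
end
end

section
/- Closed-form minimizer of the quaternion quadratic subproblem: let A be an m×m quaternion matrix, Y, Z, η m×n quaternion matrices, and γ > 0, β > 0. If X₀ is an m×n quaternion matrix satisfying (γ·Aᴴ*A + β·I) * X₀ = γ·Aᴴ*Y + β·Z − η, then for every m×n quaternion matrix X one has (γ/2)·‖A*X − Y‖_F² + (β/2)·‖X − Z‖_F² + ⟨η, X − Z⟩ ≥ (γ/2)·‖A*X₀ − Y‖_F² + (β/2)·‖X₀ − Z‖_F² + ⟨η, X₀ − Z⟩, where ⟨P, Q⟩ = ∑_{i,j} Re(star(P_{ij}) * Q_{ij}). -/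
open Matrix BigOperators Filter

noncomputable section

lemma norm_sq_eq_re (q : Quat) : ‖q‖ ^ 2 = (star q * q).re := by
  rw [Quaternion.star_mul_self]
  simp [Quaternion.normSq_eq_norm_mul_self, sq]

lemma frob_sq {m n : ℕ} (P : Matrix (Fin m) (Fin n) Quat) :
    frob P ^ 2 = qinner P P := by
  rw [frob, Real.sq_sqrt (by positivity)]
  simp [qinner, norm_sq_eq_re]

lemma frob_sq_nonneg {m n : ℕ} (P : Matrix (Fin m) (Fin n) Quat) :
    0 ≤ frob P ^ 2 := by positivity

lemma qinner_comm {m n : ℕ} (P Q : Matrix (Fin m) (Fin n) Quat) :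
    qinner P Q = qinner Q P := by
  unfold qinner
  congr 1; ext i; congr 1; ext j
  have : star (P i j) * Q i j = star (star (Q i j) * P i j) := by
    rw [StarMul.star_mul, star_star]
  rw [this, Quaternion.re_star]

lemma qinner_add_right {m n : ℕ} (P Q R : Matrix (Fin m) (Fin n) Quat) :
    qinner P (Q + R) = qinner P Q + qinner P R := by
  simp [qinner, Matrix.add_apply, mul_add, Quaternion.re_add, Finset.sum_add_distrib]

lemma qinner_add_left {m n : ℕ} (P Q R : Matrix (Fin m) (Fin n) Quat) :
    qinner (P + Q) R = qinner P R + qinner Q R := by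
  rw [qinner_comm, qinner_add_right, qinner_comm P, qinner_comm Q]

lemma qinner_smul_left {m n : ℕ} (c : ℝ) (P Q : Matrix (Fin m) (Fin n) Quat) :
    qinner (c • P) Q = c * qinner P Q := by
  simp only [qinner, Matrix.smul_apply]
  rw [Finset.mul_sum]
  refine Finset.sum_congr rfl fun i _ => ?_
  rw [Finset.mul_sum]
  refine Finset.sum_congr rfl fun j _ => ?_
  rw [← Quaternion.coe_mul_eq_smul, StarMul.star_mul, Quaternion.star_coe, mul_assoc,
    Quaternion.coe_mul_eq_smul, mul_smul_comm, Quaternion.re_smul, smul_eq_mul]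

lemma qinner_zero_left {m n : ℕ} (Q : Matrix (Fin m) (Fin n) Quat) :
    qinner 0 Q = 0 := by
  simp [qinner, Quaternion.re_zero]

lemma re_sum {ι : Type*} (s : Finset ι) (f : ι → Quat) :
    (∑ i ∈ s, f i).re = ∑ i ∈ s, (f i).re := by
  induction s using Finset.cons_induction with
  | empty => simp [Quaternion.re_zero]
  | cons a s ha ih => simp [Finset.sum_cons, ih]

lemma qinner_adjoint {m n : ℕ} (P : Matrix (Fin m) (Fin n) Quat)
    (A : Matrix (Fin m) (Fin m) Quat) (D : Matrix (Fin m) (Fin n) Quat) :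
    qinner P (A * D) = qinner (Aᴴ * P) D := by
  unfold qinner
  simp only [Matrix.mul_apply, Matrix.conjTranspose_apply, Finset.mul_sum, Finset.sum_mul,
    star_sum, StarMul.star_mul, star_star, re_sum]
  refine Eq.trans Finset.sum_comm ?_
  refine Eq.trans (Finset.sum_congr rfl fun j _ => Finset.sum_comm) ?_
  refine Eq.trans Finset.sum_comm ?_
  refine Finset.sum_congr rfl fun k _ => Finset.sum_congr rfl fun j _ =>
    Finset.sum_congr rfl fun i _ => ?_
  rw [mul_assoc]

lemma frob_sq_add {m n : ℕ} (P Q : Matrix (Fin m) (Fin n) Quat) :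
    frob (P + Q) ^ 2 = frob P ^ 2 + 2 * qinner P Q + frob Q ^ 2 := by
  rw [frob_sq, frob_sq, frob_sq, qinner_add_left, qinner_add_right, qinner_add_right,
    qinner_comm Q P]
  ring

theorem quaternion_quadratic_subproblem_min (m n : ℕ)
    (A : Matrix (Fin m) (Fin m) Quat)
    (Y Z η : Matrix (Fin m) (Fin n) Quat)
    (gam bet : ℝ) (hgam : 0 < gam) (hbet : 0 < bet)
    (X₀ : Matrix (Fin m) (Fin n) Quat)
    (hX₀ : (gam • (Aᴴ * A) + bet • (1 : Matrix (Fin m) (Fin m) Quat)) * X₀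
        = gam • (Aᴴ * Y) + bet • Z - η) :
    ∀ X : Matrix (Fin m) (Fin n) Quat,
      (gam / 2) * frob (A * X₀ - Y) ^ 2 + (bet / 2) * frob (X₀ - Z) ^ 2 +
        qinner η (X₀ - Z) ≤
      (gam / 2) * frob (A * X - Y) ^ 2 + (bet / 2) * frob (X - Z) ^ 2 +
        qinner η (X - Z) := by
  intro X
  set D := X - X₀ with hD
  have hAX : A * X - Y = (A * X₀ - Y) + A * D := by
    rw [hD, Matrix.mul_sub]; abel
  have hXZ : X - Z = (X₀ - Z) + D := by rw [hD]; abel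
  have key : gam • (Aᴴ * (A * X₀ - Y)) + bet • (X₀ - Z) + η = 0 := by
    have h2 : gam • (Aᴴ * (A * X₀)) + bet • X₀ = gam • (Aᴴ * Y) + bet • Z - η := by
      rw [← hX₀, Matrix.add_mul, Matrix.smul_mul, Matrix.smul_mul, Matrix.one_mul,
        Matrix.mul_assoc]
    rw [Matrix.mul_sub, smul_sub, smul_sub]
    linear_combination (norm := module) h2
  have hcross : gam * qinner (A * X₀ - Y) (A * D) + bet * qinner (X₀ - Z) D
      + qinner η D = 0 := by
    rw [qinner_adjoint, ← qinner_smul_left, ← qinner_smul_left, ← qinner_add_left,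
      ← qinner_add_left, key, qinner_zero_left]
  rw [hAX, hXZ, frob_sq_add, frob_sq_add, qinner_add_right]
  have h1 : 0 ≤ frob (A * D) ^ 2 := frob_sq_nonneg _
  have h2 : 0 ≤ frob D ^ 2 := frob_sq_nonneg _
  nlinarith [hcross, h1, h2, hgam.le, hbet.le]
end
end
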